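/- Let t ≥ 1 and let n_1, …, n_t be positive integers with n = n_1 + ⋯ + n_t. Let a ≥ 0 and l ≥ 0 be integers with a + l ≤ n. Then the set Ω = {(i, j) : a + 1 ≤ i ≤ a + l, 1 ≤ j ≤ t, ⌈n_j(2a−1)/(2n)⌉ < ⌈n_j(2i−1)/(2n)⌉ < ⌈n_j(2i+1)/(2n)⌉} has cardinality at most l. -/

import Mathlib

/-- Lemma 1 of the paper: the set
`Ω = {(i,j) : a+1 ≤ i ≤ a+l, 1 ≤ j ≤ t, ⌈n_j(2a-1)/(2n)⌉ < ⌈n_j(2i-1)/(2n)⌉ < ⌈n_j(2i+1)/(2n)⌉}`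
has cardinality at most `l`. -/
theorem stmt_0 (t : ℕ) (ht : 1 ≤ t) (nv : Fin t → ℕ) (hnv : ∀ j, 0 < nv j)
    (n : ℕ) (hn : n = ∑ j, nv j)
    (a l : ℕ) (hal : a + l ≤ n) :
    ((Finset.Icc (a + 1) (a + l) ×ˢ (Finset.univ : Finset (Fin t))).filter
      (fun p =>
        ⌈(nv p.2 : ℚ) * (2 * (a : ℚ) - 1) / (2 * (n : ℚ))⌉ <
          ⌈(nv p.2 : ℚ) * (2 * (p.1 : ℚ) - 1) / (2 * (n : ℚ))⌉ ∧
        ⌈(nv p.2 : ℚ) * (2 * (p.1 : ℚ) - 1) / (2 * (n : ℚ))⌉ <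
          ⌈(nv p.2 : ℚ) * (2 * (p.1 : ℚ) + 1) / (2 * (n : ℚ))⌉)).card ≤ l := by
  classical
  have hn0 : 0 < n := by
    rw [hn]
    exact Finset.sum_pos (fun j _ => hnv j) ⟨⟨0, ht⟩, Finset.mem_univ _⟩
  have hnQ : (0:ℚ) < (n:ℚ) := by exact_mod_cast hn0
  set F : Fin t → ℕ → ℤ := fun j i => ⌈(nv j : ℚ) * (2 * (i:ℚ) - 1) / (2 * (n:ℚ))⌉ with hF
  have Fmono : ∀ j, Monotone (F j) := by
    intro j i i' hii
    apply Int.ceil_le_ceil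
    have h2n : (0:ℚ) < 2 * (n:ℚ) := by positivity
    apply div_le_div_of_nonneg_right ?_ h2n.le ..
    have : (i:ℚ) ≤ (i':ℚ) := by exact_mod_cast hii
    nlinarith [hnv j, (by positivity : (0:ℚ) ≤ (nv j : ℚ))]
  have hF1 : ∀ (j : Fin t) (i : ℕ),
      ⌈(nv j : ℚ) * (2 * (i:ℚ) + 1) / (2 * (n:ℚ))⌉ = F j (i+1) := by
    intro j i
    simp only [hF]
    congr 2
    push_cast
    ring
  have key : ((Finset.Icc (a + 1) (a + l) ×ˢ (Finset.univ : Finset (Fin t))).filter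
      (fun p =>
        ⌈(nv p.2 : ℚ) * (2 * (a : ℚ) - 1) / (2 * (n : ℚ))⌉ <
          ⌈(nv p.2 : ℚ) * (2 * (p.1 : ℚ) - 1) / (2 * (n : ℚ))⌉ ∧
        ⌈(nv p.2 : ℚ) * (2 * (p.1 : ℚ) - 1) / (2 * (n : ℚ))⌉ <
          ⌈(nv p.2 : ℚ) * (2 * (p.1 : ℚ) + 1) / (2 * (n : ℚ))⌉)).card
      ≤ ∑ j : Fin t, (Finset.Ioo (F j a) (F j (a+l+1))).card := by
    rw [← Finset.card_sigma]
    apply Finset.card_le_card_of_injOn (fun p => ⟨p.2, F p.2 p.1⟩)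
    · intro p hp
      simp only [Finset.mem_coe, Finset.mem_filter, Finset.mem_product, Finset.mem_Icc, hF1] at hp
      obtain ⟨⟨⟨hp1, hp2⟩, _⟩, h1, h2⟩ := hp
      simp only [Finset.mem_coe, Finset.mem_sigma, Finset.mem_univ, Finset.mem_Ioo, true_and]
      exact ⟨h1, lt_of_lt_of_le h2 (Fmono p.2 (by omega))⟩
    · rintro ⟨i, j⟩ hp ⟨i', j'⟩ hq hpq
      simp only [Finset.mem_coe, Finset.mem_filter, Finset.mem_product, Finset.mem_Icc, hF1] at hp hq
      obtain ⟨⟨⟨hp1, hp2⟩, -⟩, hpa, hpj⟩ := hp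
      obtain ⟨⟨⟨hq1, hq2⟩, -⟩, hqa, hqj⟩ := hq
      simp only [Sigma.mk.inj_iff] at hpq
      obtain ⟨hj, hv⟩ := hpq
      subst hj
      have hv' : F j i = F j i' := eq_of_heq hv
      have hii : i = i' := by
        by_contra hne
        rcases Nat.lt_or_ge i i' with h | h
        · have h2 : F j i < F j i' := lt_of_lt_of_le hpj (Fmono j (by omega : i + 1 ≤ i'))
          omega
        · have h' : i' < i := by omega
          have h2 : F j i' < F j i := lt_of_lt_of_le hqj (Fmono j (by omega : i' + 1 ≤ i))
          omega
      simp [hii]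
  refine le_trans key ?_
  -- now bound the sum
  set J := Finset.univ.filter (fun j => F j a < F j (a+l+1)) with hJ
  have hsum : ∑ j : Fin t, (Finset.Ioo (F j a) (F j (a+l+1))).card
      = ∑ j ∈ J, (Finset.Ioo (F j a) (F j (a+l+1))).card := by
    refine (Finset.sum_subset (Finset.subset_univ J) ?_).symm
    intro x _ hx
    simp only [hJ, Finset.mem_filter, Finset.mem_univ, true_and, not_lt] at hx
    rw [Finset.Ioo_eq_empty (by exact not_lt.mpr hx), Finset.card_empty]
  rw [hsum]
  -- cast to ℤ
  have hcard : ∀ j ∈ J, ((Finset.Ioo (F j a) (F j (a+l+1))).card : ℤ)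
      = F j (a+l+1) - F j a - 1 := by
    intro j hj
    simp only [hJ, Finset.mem_filter, Finset.mem_univ, true_and] at hj
    rw [Int.card_Ioo]
    exact Int.toNat_of_nonneg (by omega)
  suffices h : (∑ j ∈ J, ((Finset.Ioo (F j a) (F j (a+l+1))).card : ℤ)) ≤ (l : ℤ) by
    have := h
    rw [← Nat.cast_sum] at this
    exact_mod_cast this
  rw [Finset.sum_congr rfl hcard]
  -- key rational estimate
  rcases J.eq_empty_or_nonempty with hJe | hJne
  · simp [hJe]
  have hlow : ∀ j : Fin t, (nv j : ℚ) * (2 * (a:ℚ) - 1) / (2 * (n:ℚ)) ≤ (F j a : ℚ) :=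
    fun j => Int.le_ceil _
  have hhigh : ∀ j : Fin t, (F j (a+l+1) : ℚ)
      < (nv j : ℚ) * (2 * ((a+l+1:ℕ):ℚ) - 1) / (2 * (n:ℚ)) + 1 :=
    fun j => Int.ceil_lt_add_one _
  have hstrict : (((∑ j ∈ J, (F j (a+l+1) - F j a)) : ℤ) : ℚ)
      < ∑ j ∈ J, ((nv j : ℚ) * ((l:ℚ)+1) / (n:ℚ) + 1) := by
    push_cast
    apply Finset.sum_lt_sum_of_nonempty hJne
    intro j _
    have h1 := hlow j
    have h2 := hhigh j
    have : (nv j : ℚ) * (2 * ((a+l+1:ℕ):ℚ) - 1) / (2 * (n:ℚ))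
        - (nv j : ℚ) * (2 * (a:ℚ) - 1) / (2 * (n:ℚ)) = (nv j : ℚ) * ((l:ℚ)+1) / (n:ℚ) := by
      push_cast
      field_simp
      ring
    linarith
  have hsum_nv : ∑ j ∈ J, ((nv j : ℚ) * ((l:ℚ)+1) / (n:ℚ) + 1)
      ≤ ((l:ℚ) + 1) + (J.card : ℚ) := by
    rw [Finset.sum_add_distrib, Finset.sum_const, nsmul_eq_mul, mul_one]
    have h1 : ∑ j ∈ J, (nv j : ℚ) * ((l:ℚ)+1) / (n:ℚ)
        = (∑ j ∈ J, (nv j : ℚ)) * ((l:ℚ)+1) / (n:ℚ) := by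
      rw [Finset.sum_mul, Finset.sum_div]
    rw [h1]
    have h2 : (∑ j ∈ J, (nv j : ℚ)) ≤ (n : ℚ) := by
      rw [hn]
      push_cast
      exact Finset.sum_le_sum_of_subset_of_nonneg (Finset.subset_univ J)
        (fun i _ _ => by positivity)
    have h3 : (∑ j ∈ J, (nv j : ℚ)) * ((l:ℚ)+1) / (n:ℚ) ≤ ((l:ℚ)+1) := by
      rw [div_le_iff₀ hnQ]
      calc (∑ j ∈ J, (nv j : ℚ)) * ((l:ℚ)+1) ≤ (n:ℚ) * ((l:ℚ)+1) := by
            apply mul_le_mul_of_nonneg_right h2 (by positivity)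
        _ = ((l:ℚ)+1) * (n:ℚ) := by ring
    linarith
  have hZ : (∑ j ∈ J, (F j (a+l+1) - F j a)) ≤ (l : ℤ) + (J.card : ℤ) := by
    have : (((∑ j ∈ J, (F j (a+l+1) - F j a)) : ℤ) : ℚ) < ((l:ℚ)+1) + (J.card : ℚ) :=
      lt_of_lt_of_le hstrict hsum_nv
    have := (by exact_mod_cast this : (∑ j ∈ J, (F j (a+l+1) - F j a)) < (l:ℤ) + 1 + (J.card : ℤ))
    omega
  have : ∑ j ∈ J, (F j (a+l+1) - F j a - 1)
      = (∑ j ∈ J, (F j (a+l+1) - F j a)) - (J.card : ℤ) := by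
    rw [Finset.sum_sub_distrib, Finset.sum_const, nsmul_eq_mul, mul_one]
  rw [this]
  omega
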